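/- Let H ≥ 1 and α_t = (H+1)/(H+t), with α_i^t = α_i · ∏_{j=i+1}^t (1-α_j) for t ≥ i. Then for every fixed i ≥ 1, the series ∑_{t=i}^∞ α_i^t converges and equals 1 + 1/H. -/

import Mathlib

open Filter Finset Topology

/-- For `H ≥ 1`, `α t = (H+1)/(H+t)`, and `α_i^t = α i * ∏_{j=i+1}^t (1 - α j)`,
for every fixed `i ≥ 1` the series `∑_{t=i}^∞ α_i^t` converges and equals `1 + 1/H`. -/
theorem tsum_lr_weights_eq (H : ℕ) (hH : 1 ≤ H)
    (α : ℕ → ℝ) (hα : ∀ t, α t = ((H : ℝ) + 1) / ((H : ℝ) + t))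
    (w : ℕ → ℕ → ℝ)
    (hw : ∀ i t, w i t = α i * ∏ j ∈ Finset.Icc (i + 1) t, (1 - α j)) :
    ∀ i, 1 ≤ i → HasSum (fun n : ℕ => w i (i + n)) (1 + 1 / (H : ℝ)) := by
  intro i hi
  have hx : (1:ℝ) ≤ (H:ℝ) := by exact_mod_cast hH
  have ha : (1:ℝ) ≤ (i:ℝ) := by exact_mod_cast hi
  set Q : ℕ → ℝ := fun N => ∏ k ∈ Finset.range N, (((i:ℝ)+k)/((H:ℝ)+i+k)) with hQdef
  have hpos : ∀ N : ℕ, (0:ℝ) < (H:ℝ)+i+N := by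
    intro N
    have : (0:ℝ) ≤ (N:ℝ) := Nat.cast_nonneg N
    linarith
  have hipos : ∀ N : ℕ, (0:ℝ) < (i:ℝ)+N := by
    intro N
    have : (0:ℝ) ≤ (N:ℝ) := Nat.cast_nonneg N
    linarith
  have hHi : (0:ℝ) < (H:ℝ)+i := by linarith
  have hQs : ∀ N : ℕ, Q (N+1) = Q N * (((i:ℝ)+N)/((H:ℝ)+i+N)) := by
    intro N
    simp only [hQdef, Finset.prod_range_succ]
  have hB : ∀ N : ℕ, ∏ j ∈ Finset.Icc (i+1) (i+N), (1 - α j)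
      = Q N * (((H:ℝ)+i)/((H:ℝ)+i+N)) := by
    intro N
    induction N with
    | zero =>
      simp only [Nat.add_zero, hQdef, Finset.range_zero, Finset.prod_empty, one_mul,
        Nat.cast_zero, add_zero]
      rw [Finset.Icc_eq_empty (by omega), Finset.prod_empty, div_self hHi.ne']
    | succ N ih =>
      have h1 : i + (N+1) = (i+N) + 1 := by omega
      rw [h1, Finset.prod_Icc_succ_top (by omega), ih, hα, hQs]
      have h2 := (hpos N).ne'
      have h3 := (hpos (N+1)).ne'
      push_cast at h3 ⊢
      field_simp
      ring
  have hstep : ∀ N : ℕ, w i (i+N) = (1+1/(H:ℝ))*(Q N - Q (N+1)) := by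
    intro N
    rw [hw, hB, hα, hQs]
    have h2 := (hpos N).ne'
    have h0 : (H:ℝ) ≠ 0 := by linarith
    push_cast
    field_simp
    ring
  have hsum : ∀ N : ℕ, ∑ n ∈ Finset.range N, w i (i+n) = (1+1/(H:ℝ))*(1 - Q N) := by
    intro N
    induction N with
    | zero => simp [hQdef]
    | succ N ih =>
      rw [Finset.sum_range_succ, ih, hstep]
      ring
  have hQnn : ∀ N : ℕ, 0 ≤ Q N := by
    intro N
    apply Finset.prod_nonneg
    intro k _
    have h1 := hipos k
    have h2 := hpos k
    positivity
  have hQle : ∀ N : ℕ, Q N ≤ (i:ℝ)/((i:ℝ)+N) := by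
    intro N
    induction N with
    | zero =>
      simp only [hQdef, Finset.range_zero, Finset.prod_empty, Nat.cast_zero, add_zero]
      rw [div_self (by linarith : (i:ℝ) ≠ 0)]
    | succ N ih =>
      rw [hQs]
      have hiN := hipos N
      have key : ((i:ℝ)+N)/((H:ℝ)+i+N) ≤ ((i:ℝ)+N)/((i:ℝ)+N+1) := by
        apply div_le_div_of_nonneg_left (by linarith) (by linarith)
        linarith
      calc Q N * (((i:ℝ)+N)/((H:ℝ)+i+N))
          ≤ ((i:ℝ)/((i:ℝ)+N)) * (((i:ℝ)+N)/((i:ℝ)+N+1)) := by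
            apply mul_le_mul ih key (by positivity) (by positivity)
        _ ≤ (i:ℝ)/((i:ℝ)+(N+1:ℕ)) := by
            have h2 := (hipos (N+1)).ne'
            have h3 := hiN.ne'
            push_cast at h2 ⊢
            apply le_of_eq
            rw [div_mul_div_comm, mul_comm (i:ℝ) ((i:ℝ)+N), mul_div_mul_left _ _ h3]
            ring_nf
  have hbound : Tendsto (fun N : ℕ => (i:ℝ)/((i:ℝ)+N)) atTop (𝓝 0) := by
    apply Tendsto.div_atTop tendsto_const_nhds
    exact tendsto_atTop_add_const_left _ _ tendsto_natCast_atTop_atTop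
  have hQ0 : Tendsto Q atTop (𝓝 0) :=
    squeeze_zero hQnn hQle hbound
  have hnn : ∀ n : ℕ, 0 ≤ w i (i+n) := by
    intro n
    rw [hw]
    apply mul_nonneg
    · rw [hα]
      have := hpos 0
      positivity
    · apply Finset.prod_nonneg
      intro j hj
      have hj' : i + 1 ≤ j := (Finset.mem_Icc.mp hj).1
      rw [hα, sub_nonneg]
      apply div_le_one_of_le₀
      · have : (i:ℝ) + 1 ≤ (j:ℝ) := by exact_mod_cast hj'
        linarith
      · have : (0:ℝ) ≤ (j:ℝ) := Nat.cast_nonneg j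
        linarith
  rw [hasSum_iff_tendsto_nat_of_nonneg hnn]
  have : Tendsto (fun N : ℕ => (1+1/(H:ℝ))*(1 - Q N)) atTop (𝓝 ((1+1/(H:ℝ))*(1-0))) := by
    exact Tendsto.const_mul _ (tendsto_const_nhds.sub hQ0)
  simp only [sub_zero, mul_one] at this
  simpa only [hsum] using this
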